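/- arXiv:2508.08057 — 5 statements merged into one kernel-verified Lean document; each statement's English description precedes it below -/
import Mathlib

section
/- Fix k ∈ ℤ and a linear functional f on the span of {M_t : t ∈ ℤ} which is nonzero. The bracket defined on the ℂ-vector space with basis {L_r, M_r : r ∈ ℤ} by [L_r, L_s, M_t] = f(M_t)(r−s)L_{r+s+k} (extended alternating-trilinearly, with all other brackets of basis elements zero) satisfies the fundamental identity of a 3-Lie algebra. -/
/-- The underlying space of `A_{f,k}`: formal ℂ-linear combinations of basis
elements indexed by `Bool × ℤ` (`(false, r)` is `L_r`, `(true, r)` is `M_r`). -/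
abbrev Afk : Type := (Bool × ℤ) →₀ ℂ

/-- Basis element `L_r`. -/
noncomputable def Lb (r : ℤ) : Afk := Finsupp.single (false, r) 1
/-- Basis element `M_r`. -/
noncomputable def Mb (r : ℤ) : Afk := Finsupp.single (true, r) 1

/-- The linear functional `f` determined by its values `F t := f(M_t)` on the `M_t`
(and `f(L_r) = 0`), applied to basis indices. -/
noncomputable def fval (F : ℤ → ℂ) : Bool × ℤ → ℂ
  | (false, _) => 0
  | (true, t) => F t

/-- Structure constants of `A_{f,k}`: the alternating trilinear extension of
`[L_r,L_s,M_t] = f(M_t)(r-s) L_{r+s+k}`, all other brackets of basis elements zero. -/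
noncomputable def scf (F : ℤ → ℂ) (k : ℤ) : Bool × ℤ → Bool × ℤ → Bool × ℤ → Afk
  | (false, r), (false, s), (true, t) => (F t * ((r - s : ℤ) : ℂ)) • Lb (r + s + k)
  | (false, r), (true, s), (false, t) => (F s * ((t - r : ℤ) : ℂ)) • Lb (r + t + k)
  | (true, r), (false, s), (false, t) => (F r * ((s - t : ℤ) : ℂ)) • Lb (s + t + k)
  | _, _, _ => 0

/-- The 3-Lie bracket of `A_{f,k}`, extended trilinearly from the structure
constants. -/
noncomputable def br (F : ℤ → ℂ) (k : ℤ) (x y z : Afk) : Afk :=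
  x.sum fun a ca => y.sum fun b cb => z.sum fun c cc => (ca * cb * cc) • scf F k a b c

section Aux
variable (F : ℤ → ℂ) (k : ℤ)

lemma br_single (a b c : Bool × ℤ) (ca cb cc : ℂ) :
    br F k (Finsupp.single a ca) (Finsupp.single b cb) (Finsupp.single c cc)
      = (ca * cb * cc) • scf F k a b c := by
  unfold br
  rw [Finsupp.sum_single_index, Finsupp.sum_single_index, Finsupp.sum_single_index] <;>
    simp [Finsupp.sum_single_index]

lemma br_zero1 (y z : Afk) : br F k 0 y z = 0 := by simp [br]
lemma br_zero2 (x z : Afk) : br F k x 0 z = 0 := by simp [br]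
lemma br_zero3 (x y : Afk) : br F k x y 0 = 0 := by simp [br]

lemma br_add1 (x x' y z : Afk) : br F k (x + x') y z = br F k x y z + br F k x' y z := by
  unfold br
  rw [Finsupp.sum_add_index'] <;> intros <;> simp [add_mul, add_smul, Finsupp.sum_add]

lemma br_add2 (x y y' z : Afk) : br F k x (y + y') z = br F k x y z + br F k x y' z := by
  unfold br
  rw [← Finsupp.sum_add]
  apply Finsupp.sum_congr
  intro a _
  rw [Finsupp.sum_add_index'] <;> intros <;>
    simp [mul_add, add_mul, add_smul, Finsupp.sum_add]

lemma br_add3 (x y z z' : Afk) : br F k x y (z + z') = br F k x y z + br F k x y z' := by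
  unfold br
  rw [← Finsupp.sum_add]
  apply Finsupp.sum_congr
  intro a _
  rw [← Finsupp.sum_add]
  apply Finsupp.sum_congr
  intro b _
  rw [Finsupp.sum_add_index'] <;> intros <;> simp [mul_add, add_smul]

lemma br_smul1 (t : ℂ) (x y z : Afk) : br F k (t • x) y z = t • br F k x y z := by
  unfold br
  rw [Finsupp.sum_smul_index, Finsupp.smul_sum] <;>
    simp [mul_assoc, mul_smul, Finsupp.smul_sum]

lemma br_smul2 (t : ℂ) (x y z : Afk) : br F k x (t • y) z = t • br F k x y z := by
  unfold br
  rw [Finsupp.smul_sum]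
  apply Finsupp.sum_congr
  intro a _
  rw [Finsupp.sum_smul_index, Finsupp.smul_sum] <;>
    simp [mul_smul, Finsupp.smul_sum, mul_left_comm _ t]

lemma br_smul3 (t : ℂ) (x y z : Afk) : br F k x y (t • z) = t • br F k x y z := by
  unfold br
  rw [Finsupp.smul_sum]
  apply Finsupp.sum_congr
  intro a _
  rw [Finsupp.smul_sum]
  apply Finsupp.sum_congr
  intro b _
  rw [Finsupp.sum_smul_index, Finsupp.smul_sum] <;>
    simp [mul_smul, mul_left_comm _ t, mul_comm _ t]

lemma br_key (a b c d e : Bool × ℤ) :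
    br F k (Finsupp.single a 1) (Finsupp.single b 1) (scf F k c d e)
      = br F k (scf F k a b c) (Finsupp.single d 1) (Finsupp.single e 1)
      + br F k (Finsupp.single c 1) (scf F k a b d) (Finsupp.single e 1)
      + br F k (Finsupp.single c 1) (Finsupp.single d 1) (scf F k a b e) := by
  obtain ⟨ba, pa⟩ := a; obtain ⟨bb, pb⟩ := b; obtain ⟨bc, pc⟩ := c
  obtain ⟨bd, pd⟩ := d; obtain ⟨be, pe⟩ := e
  rcases ba <;> rcases bb <;> rcases bc <;> rcases bd <;> rcases be <;>
    simp only [scf, Lb, br_smul1, br_smul2, br_smul3, br_single, br_zero1, br_zero2, br_zero3,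
      smul_zero, zero_add, add_zero, one_mul, mul_one] <;>
    · ext ⟨bi, ni⟩
      rcases bi <;>
      simp only [Finsupp.smul_apply, Finsupp.add_apply, Finsupp.single_apply, smul_eq_mul,
        Prod.mk.injEq, eq_self_iff_true, true_and, false_and, and_true, and_false,
        Bool.false_eq_true, Bool.true_eq_false, if_false, if_true, ite_false, ite_true,
        not_false_eq_true, Finsupp.coe_zero, Pi.zero_apply, mul_ite, mul_zero, Finsupp.coe_add,
        Pi.add_apply, Finsupp.coe_smul, Pi.smul_apply]
      <;> (try split_ifs) <;> (try push_cast) <;> first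
        | (exfalso; omega)
        | ring

lemma single_eq_smul (a : Bool × ℤ) (c : ℂ) :
    (Finsupp.single a c : Afk) = c • Finsupp.single a 1 := by
  rw [Finsupp.smul_single', mul_one]

end Aux

/-- The bracket of `A_{f,k}` satisfies the fundamental (Filippov)
identity of a 3-Lie algebra. -/
theorem Afk_fundamental_identity (F : ℤ → ℂ) (hF : ∃ t, F t ≠ 0) (k : ℤ) :
    ∀ x y u v w : Afk, br F k x y (br F k u v w) =
      br F k (br F k x y u) v w + br F k u (br F k x y v) w +
        br F k u v (br F k x y w) := by
  intro x y u v w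
  induction x using Finsupp.induction_linear with
  | zero => simp [br_zero1, br_zero2, br_zero3]
  | add f g hf hg => simp only [br_add1, br_add2, br_add3, hf, hg]; abel
  | single a ca =>
  induction y using Finsupp.induction_linear with
  | zero => simp [br_zero1, br_zero2, br_zero3]
  | add f g hf hg => simp only [br_add1, br_add2, br_add3, hf, hg]; abel
  | single b cb =>
  induction u using Finsupp.induction_linear with
  | zero => simp [br_zero1, br_zero2, br_zero3]
  | add f g hf hg => simp only [br_add1, br_add2, br_add3, hf, hg]; abel
  | single c cu =>
  induction v using Finsupp.induction_linear with
  | zero => simp [br_zero1, br_zero2, br_zero3]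
  | add f g hf hg => simp only [br_add1, br_add2, br_add3, hf, hg]; abel
  | single d cv =>
  induction w using Finsupp.induction_linear with
  | zero => simp [br_zero1, br_zero2, br_zero3]
  | add f g hf hg => simp only [br_add1, br_add2, br_add3, hf, hg]; abel
  | single e cw =>
  rw [single_eq_smul a ca, single_eq_smul b cb, single_eq_smul c cu, single_eq_smul d cv,
    single_eq_smul e cw]
  simp only [br_smul1, br_smul2, br_smul3, br_single, one_mul, one_smul, smul_smul, smul_add]
  rw [br_key]
  simp only [smul_add, smul_smul]
  module
end

section
/- Let D be a 1/3-derivation of the 3-Lie algebra A_{f,k}. Then there exist h ∈ ℂ, a finitely supported family (c_i)_{i∈ℤ} ⊂ ℂ, and complex numbers (d_{r,j})_{r,j∈ℤ} (finitely supported in j for each r) such that D(L_r) = h·L_r and D(M_r) = f(M_r)∑_{i∈ℤ} c_i L_i + ∑_{j∈ℤ} d_{r,j} M_j for all r ∈ ℤ, where ∑_{j∈ℤ} f(M_j) d_{r,j} = h·f(M_r) for every r ∈ ℤ. -/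
section
variable (F : ℤ → ℂ) (k : ℤ)

lemma br1 (x : Afk) (b c : Bool × ℤ) :
    br F k x (Finsupp.single b 1) (Finsupp.single c 1) = x.sum fun a ca => ca • scf F k a b c := by
  unfold br
  refine Finsupp.sum_congr (fun a _ => ?_)
  rw [Finsupp.sum_single_index (by simp), Finsupp.sum_single_index (by simp)]
  simp

lemma br2 (a : Bool × ℤ) (y : Afk) (c : Bool × ℤ) :
    br F k (Finsupp.single a 1) y (Finsupp.single c 1) = y.sum fun b cb => cb • scf F k a b c := by
  unfold br
  rw [Finsupp.sum_single_index (by simp [Finsupp.sum])]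
  refine Finsupp.sum_congr (fun b _ => ?_)
  rw [Finsupp.sum_single_index (by simp)]
  simp

lemma br3 (a b : Bool × ℤ) (z : Afk) :
    br F k (Finsupp.single a 1) (Finsupp.single b 1) z = z.sum fun c cc => cc • scf F k a b c := by
  unfold br
  rw [Finsupp.sum_single_index (by simp [Finsupp.sum])]
  rw [Finsupp.sum_single_index (by simp [Finsupp.sum])]
  refine Finsupp.sum_congr (fun c _ => ?_)
  simp

lemma scf_app_true (a b c : Bool × ℤ) (j : ℤ) : (scf F k a b c) (true, j) = 0 := by
  obtain ⟨a1, a2⟩ := a; obtain ⟨b1, b2⟩ := b; obtain ⟨c1, c2⟩ := c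
  cases a1 <;> cases b1 <;> cases c1 <;>
    simp [scf, Lb, Finsupp.single_apply]

end

section
variable (F : ℤ → ℂ) (k : ℤ)

lemma sumc {α : Type*} (x : α →₀ ℂ) (g : α → ℂ → ℂ) (a0 : α)
    (h1 : ∀ a ca, a ≠ a0 → g a ca = 0) (h2 : g a0 0 = 0) :
    x.sum g = g a0 (x a0) := by
  classical
  rw [Finsupp.sum]
  exact Finset.sum_eq_single a0 (fun b _ hb => h1 b _ hb)
    (fun h => by rw [Finsupp.notMem_support_iff.mp h]; exact h2)

lemma sum0 {α : Type*} (x : α →₀ ℂ) (g : α → ℂ → ℂ)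
    (h1 : ∀ a ca, g a ca = 0) : x.sum g = 0 := by
  rw [Finsupp.sum]
  exact Finset.sum_eq_zero (fun b _ => h1 b _)

lemma scf_MM (a : Bool × ℤ) (s t : ℤ) : scf F k a (true, s) (true, t) = 0 := by
  obtain ⟨a1, a2⟩ := a; cases a1 <;> rfl

lemma brX_LM_app_false (x : Afk) (s t j : ℤ) :
    (br F k x (Lb s) (Mb t)) (false, j)
      = x (false, j - s - k) * (F t * ((j - s - k - s : ℤ) : ℂ)) := by
  rw [Lb, Mb, br1, Finsupp.sum_apply]
  rw [sumc _ _ (false, j - s - k)]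
  · simp only [Finsupp.smul_apply, smul_eq_mul, scf, Lb]
    rw [show j - s - k + s + k = j from by ring]
    simp [Finsupp.single_apply]
  · rintro ⟨a1, i⟩ ca hne
    cases a1
    · have hi : i ≠ j - s - k := by simpa using hne
      simp only [Finsupp.smul_apply, smul_eq_mul, scf, Lb]
      simp [Finsupp.single_apply, show ¬(i + s + k = j) from by omega]
    · simp [scf]
  · simp

lemma brX_LM_app_true (x : Afk) (s t j : ℤ) :
    (br F k x (Lb s) (Mb t)) (true, j) = 0 := by
  rw [Lb, Mb, br1, Finsupp.sum_apply]
  exact sum0 _ _ (fun a ca => by simp [scf_app_true])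

lemma brLXM_app_false (r : ℤ) (y : Afk) (t j : ℤ) :
    (br F k (Lb r) y (Mb t)) (false, j)
      = y (false, j - r - k) * (F t * ((r - (j - r - k) : ℤ) : ℂ)) := by
  rw [Lb, Mb, br2, Finsupp.sum_apply]
  rw [sumc _ _ (false, j - r - k)]
  · simp only [Finsupp.smul_apply, smul_eq_mul, scf, Lb]
    rw [show r + (j - r - k) + k = j from by ring]
    simp [Finsupp.single_apply]
  · rintro ⟨b1, i⟩ cb hne
    cases b1
    · have hi : i ≠ j - r - k := by simpa using hne
      simp only [Finsupp.smul_apply, smul_eq_mul, scf, Lb]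
      simp [Finsupp.single_apply, show ¬(r + i + k = j) from by omega]
    · simp [scf]
  · simp

lemma brLXM_app_true (r : ℤ) (y : Afk) (t j : ℤ) :
    (br F k (Lb r) y (Mb t)) (true, j) = 0 := by
  rw [Lb, Mb, br2, Finsupp.sum_apply]
  exact sum0 _ _ (fun a ca => by simp [scf_app_true])

lemma brLLX_app_false_ne (r s : ℤ) (z : Afk) (j : ℤ) (hj : r + s + k ≠ j) :
    (br F k (Lb r) (Lb s) z) (false, j) = 0 := by
  rw [Lb, Lb, br3, Finsupp.sum_apply]
  refine sum0 _ _ ?_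
  rintro ⟨c1, i⟩ cc
  cases c1
  · simp [scf]
  · simp only [Finsupp.smul_apply, smul_eq_mul, scf, Lb]
    simp [Finsupp.single_apply, hj]

lemma brLLX_app_false_eq (r s : ℤ) (z : Afk) :
    (br F k (Lb r) (Lb s) z) (false, r + s + k)
      = ((r - s : ℤ) : ℂ) * z.sum (fun p cc => fval F p * cc) := by
  rw [Lb, Lb, br3, Finsupp.sum_apply, Finsupp.mul_sum]
  refine Finsupp.sum_congr ?_
  rintro ⟨c1, i⟩ _
  cases c1
  · simp [scf, fval]
  · simp only [Finsupp.smul_apply, smul_eq_mul, scf, Lb, fval]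
    simp [Finsupp.single_apply]
    ring

lemma brLLX_app_true (r s : ℤ) (z : Afk) (j : ℤ) :
    (br F k (Lb r) (Lb s) z) (true, j) = 0 := by
  rw [Lb, Lb, br3, Finsupp.sum_apply]
  exact sum0 _ _ (fun a ca => by simp [scf_app_true])

lemma brLLM (r s t : ℤ) :
    br F k (Lb r) (Lb s) (Mb t) = (F t * ((r - s : ℤ) : ℂ)) • Lb (r + s + k) := by
  rw [Lb, Lb, Mb, br3, Finsupp.sum_single_index (by simp)]
  simp [scf]

lemma brLMM (r s t : ℤ) : br F k (Lb r) (Mb s) (Mb t) = 0 := by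
  rw [Lb, Mb, Mb, br3, Finsupp.sum_single_index (by simp)]
  simp [scf]

lemma brLMX_app_false (r s : ℤ) (z : Afk) (j : ℤ) :
    (br F k (Lb r) (Mb s) z) (false, j)
      = z (false, j - r - k) * (F s * ((j - r - k - r : ℤ) : ℂ)) := by
  rw [Lb, Mb, br3, Finsupp.sum_apply]
  rw [sumc _ _ (false, j - r - k)]
  · simp only [Finsupp.smul_apply, smul_eq_mul, scf, Lb]
    rw [show r + (j - r - k) + k = j from by ring]
    simp [Finsupp.single_apply]
  · rintro ⟨c1, i⟩ cc hne
    cases c1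
    · have hi : i ≠ j - r - k := by simpa using hne
      simp only [Finsupp.smul_apply, smul_eq_mul, scf, Lb]
      simp [Finsupp.single_apply, show ¬(r + i + k = j) from by omega]
    · simp [scf]
  · simp

lemma brXMM_zero (x : Afk) (s t : ℤ) : br F k x (Mb s) (Mb t) = 0 := by
  rw [Mb, Mb, br1, Finsupp.sum]
  exact Finset.sum_eq_zero (fun a _ => by rw [scf_MM]; simp)

end

lemma theta_zero (m : ℤ) (hm : m ≠ 0) (θ : ℤ → ℂ)
    (H : ∀ u v : ℤ, 3 * ((u - v : ℤ) : ℂ) * θ (u + v)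
      = ((u - v + m : ℤ) : ℂ) * θ u + ((u - v - m : ℤ) : ℂ) * θ v) :
    ∀ x, θ x = 0 := by
  have hmC : (m : ℂ) ≠ 0 := Int.cast_ne_zero.mpr hm
  have R1 : ∀ x : ℤ, ((2 * x - m : ℤ) : ℂ) * θ x = ((x - m : ℤ) : ℂ) * θ 0 := by
    intro x
    have h := H x 0
    push_cast at h ⊢
    have hx : x + 0 = x := by ring
    rw [hx] at h
    linear_combination h
  have h0 : θ 0 = 0 := by
    have A := R1 (2 * m)
    have B := R1 (3 * m)
    have Cc := H (2 * m) m
    have h3 : (2 * m) + m = 3 * m := by ring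
    rw [h3] at Cc
    push_cast at A B Cc
    have key : (m : ℂ) * θ 0 = 0 := by
      linear_combination (5/4) * A - (9/8) * B + (15/8) * Cc
    exact (mul_eq_zero.mp key).resolve_left hmC
  have aux : ∀ y : ℤ, 2 * y - m ≠ 0 → θ y = 0 := by
    intro y hy
    have h := R1 y
    rw [h0, mul_zero] at h
    exact (mul_eq_zero.mp h).resolve_left (Int.cast_ne_zero.mpr hy)
  intro x
  by_cases hx : 2 * x - m = 0
  · have h1 : θ (x + m) = 0 := aux _ (by omega)
    have h2 : θ (-m) = 0 := aux _ (by omega)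
    have h := H (x + m) (-m)
    have hsum : (x + m) + (-m) = x := by ring
    rw [hsum, h1, h2, mul_zero, mul_zero, add_zero] at h
    have hne : ((x + m - -m : ℤ) : ℂ) ≠ 0 := by
      apply Int.cast_ne_zero.mpr
      omega
    rcases mul_eq_zero.mp h with h' | h'
    · exact absurd (mul_eq_zero.mp h') (by push_neg; exact ⟨by norm_num, hne⟩)
    · exact h'
  · exact aux x hx

lemma diag_const (k : ℤ) (G : ℤ → ℂ) (C : ℂ)
    (H : ∀ r s : ℤ, r ≠ s → 3 * G (r + s + k) = G r + G s + C) :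
    (∀ x, G x = G 0) ∧ C = G 0 := by
  set e : ℂ := G 0 - G (-1) with he
  have step1 : ∀ x : ℤ, x ≠ 0 → x ≠ -2 → G (x + 1) = G x + e := by
    intro x hx hx2
    have h1 := H x 0 hx
    have h2 := H (x + 1) (-1) (by omega)
    rw [show x + 0 + k = x + k from by ring] at h1
    rw [show (x + 1) + (-1) + k = x + k from by ring] at h2
    linear_combination h1 - h2
  have step2 : ∀ x : ℤ, x ≠ 0 → x ≠ -4 → G (x + 2) = G x + (G 0 - G (-2)) := by
    intro x hx hx2
    have h1 := H x 0 hx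
    have h2 := H (x + 2) (-2) (by omega)
    rw [show x + 0 + k = x + k from by ring] at h1
    rw [show (x + 2) + (-2) + k = x + k from by ring] at h2
    linear_combination h1 - h2
  have he3 : G 0 - G (-2) = 2 * e := by
    have a1 := step1 1 (by omega) (by omega)
    have a2 := step1 2 (by omega) (by omega)
    have a3 := step2 1 (by omega) (by omega)
    rw [show (1:ℤ) + 1 = 2 from rfl] at a1
    rw [show (2:ℤ) + 1 = 3 from rfl] at a2
    rw [show (1:ℤ) + 2 = 3 from rfl] at a3
    linear_combination a1 + a2 - a3
  have step_all : ∀ x : ℤ, G (x + 1) = G x + e := by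
    intro x
    by_cases hx : x = 0
    · subst hx
      have b1 := step2 (-1) (by omega) (by omega)
      have b2 := step1 (-1) (by omega) (by omega)
      rw [show (-1:ℤ) + 2 = 1 from rfl] at b1
      rw [show (-1:ℤ) + 1 = 0 from rfl] at b2
      rw [he3] at b1
      rw [show (0:ℤ) + 1 = 1 from rfl]
      linear_combination b1 - b2
    · by_cases hx2 : x = -2
      · subst hx2
        have b1 := step2 (-3) (by omega) (by omega)
        have b2 := step1 (-3) (by omega) (by omega)
        rw [show (-3:ℤ) + 2 = -1 from rfl] at b1
        rw [show (-3:ℤ) + 1 = -2 from rfl] at b2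
        rw [he3] at b1
        rw [show (-2:ℤ) + 1 = -1 from rfl]
        linear_combination b1 - b2
      · exact step1 x hx hx2
  have lin : ∀ x : ℤ, G x = G 0 + e * (x : ℂ) := by
    intro x
    induction x using Int.induction_on with
    | zero => simp
    | succ n ih =>
      have := step_all n
      rw [this, ih]; push_cast; ring
    | pred n ih =>
      have h := step_all (-(n:ℤ) - 1)
      rw [show (-(n:ℤ) - 1) + 1 = -(n:ℤ) from by ring] at h
      push_cast at ih h ⊢
      linear_combination ih - h
  have e0 : e = 0 := by
    have h1 := H 1 0 (by omega)
    have h2 := H 2 0 (by omega)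
    rw [lin (1 + 0 + k), lin 1, lin 0] at h1
    rw [lin (2 + 0 + k), lin 2, lin 0] at h2
    push_cast at h1 h2
    linear_combination (h2 - h1) / 2
  constructor
  · intro x; rw [lin x, e0]; ring
  · have h1 := H 1 0 (by omega)
    rw [lin (1 + 0 + k), lin 1, lin 0, e0] at h1
    linear_combination -h1
/-- Every 1/3-derivation `D` of `A_{f,k}` has the form
`D(L_r) = h L_r`, `D(M_r) = f(M_r) ∑ᵢ cᵢ Lᵢ + ∑ⱼ d_{r,j} Mⱼ` with
`∑ⱼ f(Mⱼ) d_{r,j} = h f(M_r)` for all `r`. -/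
theorem Afk_one_third_derivation_form (F : ℤ → ℂ) (hF : ∃ t, F t ≠ 0) (k : ℤ)
    (D : Afk →ₗ[ℂ] Afk)
    (hD : ∀ x y z : Afk, D (br F k x y z) =
      (3⁻¹ : ℂ) • (br F k (D x) y z + br F k x (D y) z + br F k x y (D z))) :
    ∃ (h : ℂ) (c : ℤ →₀ ℂ) (d : ℤ → ℤ →₀ ℂ),
      (∀ r : ℤ, D (Lb r) = h • Lb r) ∧
      (∀ r : ℤ, D (Mb r) =
        F r • (c.sum fun i ci => ci • Lb i) + (d r).sum fun j v => v • Mb j) ∧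
      (∀ r : ℤ, ((d r).sum fun j v => F j * v) = h * F r) := by
  classical
  obtain ⟨t0, hF0⟩ := hF
  set Q : ℤ → ℂ := fun t => (D (Mb t)).sum (fun p cc => fval F p * cc) with hQ
  have E1 : ∀ r s t j : ℤ,
      F t * ((r - s : ℤ) : ℂ) * (D (Lb (r + s + k))) (false, j)
        = 3⁻¹ * ((D (Lb r)) (false, j - s - k) * (F t * ((j - s - k - s : ℤ) : ℂ))
            + (D (Lb s)) (false, j - r - k) * (F t * ((r - (j - r - k) : ℤ) : ℂ))
            + (if r + s + k = j then ((r - s : ℤ) : ℂ) * Q t else 0)) := by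
    intro r s t j
    have h := hD (Lb r) (Lb s) (Mb t)
    rw [brLLM, map_smul] at h
    have h2 := DFunLike.congr_fun h ((false, j) : Bool × ℤ)
    rw [Finsupp.smul_apply, smul_eq_mul, Finsupp.smul_apply, smul_eq_mul,
      Finsupp.add_apply, Finsupp.add_apply,
      brX_LM_app_false, brLXM_app_false] at h2
    by_cases hj : r + s + k = j
    · rw [if_pos hj]
      rw [← hj] at h2 ⊢
      rw [brLLX_app_false_eq] at h2
      rw [hQ]
      exact h2
    · rw [if_neg hj]
      rw [brLLX_app_false_ne F k r s _ j hj] at h2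
      simpa using h2
  have E1t : ∀ r s t j : ℤ,
      F t * ((r - s : ℤ) : ℂ) * (D (Lb (r + s + k))) (true, j) = 0 := by
    intro r s t j
    have h := hD (Lb r) (Lb s) (Mb t)
    rw [brLLM, map_smul] at h
    have h2 := DFunLike.congr_fun h ((true, j) : Bool × ℤ)
    rw [Finsupp.smul_apply, smul_eq_mul, Finsupp.smul_apply, smul_eq_mul,
      Finsupp.add_apply, Finsupp.add_apply,
      brX_LM_app_true, brLXM_app_true, brLLX_app_true] at h2
    simpa using h2
  have E2 : ∀ r s t j : ℤ,
      (0 : ℂ) = 3⁻¹ * ((D (Mb s)) (false, j - r - k) * (F t * ((r - (j - r - k) : ℤ) : ℂ))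
        + (D (Mb t)) (false, j - r - k) * (F s * ((j - r - k - r : ℤ) : ℂ))) := by
    intro r s t j
    have h := hD (Lb r) (Mb s) (Mb t)
    rw [brLMM, map_zero, brXMM_zero] at h
    have h2 := DFunLike.congr_fun h ((false, j) : Bool × ℤ)
    rw [Finsupp.smul_apply, smul_eq_mul, Finsupp.add_apply, Finsupp.add_apply,
      brLXM_app_false, brLMX_app_false] at h2
    simpa using h2
  -- relation between the L-parts of D(Mb)
  have cRel : ∀ s t i : ℤ, F t * (D (Mb s)) (false, i) = F s * (D (Mb t)) (false, i) := by
    intro s t i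
    have h := E2 (i + 1) s t (i + (i + 1) + k)
    rw [show i + (i + 1) + k - (i + 1) - k = i from by ring] at h
    push_cast at h
    linear_combination -3 * h
  -- M-part of D(Lb) vanishes
  have Bzero : ∀ R j : ℤ, (D (Lb R)) (true, j) = 0 := by
    intro R j
    by_cases hR : R = k
    · have h := E1t 1 (-1) t0 j
      rw [show (1 : ℤ) + -1 + k = k from by ring] at h
      subst hR
      rcases mul_eq_zero.mp h with h' | h'
      · rcases mul_eq_zero.mp h' with h'' | h''
        · exact absurd h'' hF0
        · exact absurd h'' (by norm_num)
      · exact h'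
    · have h := E1t (R - k) 0 t0 j
      rw [show R - k + 0 + k = R from by ring] at h
      rcases mul_eq_zero.mp h with h' | h'
      · rcases mul_eq_zero.mp h' with h'' | h''
        · exact absurd h'' hF0
        · exact absurd h'' (Int.cast_ne_zero.mpr (by omega))
      · exact h'
  -- off-diagonal L-part of D(Lb) vanishes
  have Azero : ∀ r j : ℤ, r ≠ j → (D (Lb r)) (false, j) = 0 := by
    intro r j hne
    have Hθ : ∀ u v : ℤ, 3 * ((u - v : ℤ) : ℂ) * (D (Lb (u + v - k))) (false, u + v - k + (j - r))
        = ((u - v + (j - r) : ℤ) : ℂ) * (D (Lb (u - k))) (false, u - k + (j - r))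
          + ((u - v - (j - r) : ℤ) : ℂ) * (D (Lb (v - k))) (false, v - k + (j - r)) := by
      intro u v
      have h := E1 (u - k) (v - k) t0 (u + v - k + (j - r))
      rw [show u - k + (v - k) + k = u + v - k from by ring] at h
      rw [show u + v - k + (j - r) - (v - k) - k = u - k + (j - r) from by ring] at h
      rw [show u + v - k + (j - r) - (u - k) - k = v - k + (j - r) from by ring] at h
      rw [if_neg (show ¬(u + v - k = u + v - k + (j - r)) from by omega)] at h
      apply mul_left_cancel₀ hF0
      push_cast at h ⊢
      linear_combination 3 * h
    have hz := theta_zero (j - r) (by omega)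
      (fun x => (D (Lb (x - k))) (false, x - k + (j - r))) (fun u v => Hθ u v) (r + k)
    rw [show r + k - k + (j - r) = j from by ring, show r + k - k = r from by ring] at hz
    exact hz
  -- diagonal of D(Lb) is constant
  have Hdiag : ∀ r s : ℤ, r ≠ s →
      3 * (D (Lb (r + s + k))) (false, r + s + k)
        = (D (Lb r)) (false, r) + (D (Lb s)) (false, s) + (F t0)⁻¹ * Q t0 := by
    intro r s hrs
    have h := E1 r s t0 (r + s + k)
    rw [if_pos rfl] at h
    rw [show r + s + k - s - k = r from by ring, show r + s + k - r - k = s from by ring] at h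
    have hrs' : ((r - s : ℤ) : ℂ) ≠ 0 := Int.cast_ne_zero.mpr (by omega)
    have key : ((r - s : ℤ) : ℂ) * (F t0 * (3 * (D (Lb (r + s + k))) (false, r + s + k)))
        = ((r - s : ℤ) : ℂ) * (F t0 * ((D (Lb r)) (false, r) + (D (Lb s)) (false, s)) + Q t0) := by
      push_cast at h ⊢
      linear_combination 3 * h
    have key2 := mul_left_cancel₀ hrs' key
    field_simp
    linear_combination key2
  obtain ⟨Gconst, hCC⟩ := diag_const k (fun x => (D (Lb x)) (false, x)) ((F t0)⁻¹ * Q t0)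
    (fun r s hrs => Hdiag r s hrs)
  set hh : ℂ := (D (Lb 0)) (false, 0) with hhh
  have DLr : ∀ r : ℤ, D (Lb r) = hh • Lb r := by
    intro r
    ext p
    obtain ⟨b, j⟩ := p
    cases b
    · rw [Finsupp.smul_apply, smul_eq_mul]
      by_cases hrj : r = j
      · subst hrj
        have g : (D (Lb r)) (false, r) = hh := Gconst r
        rw [g]
        simp [Lb, Finsupp.single_apply]
      · rw [Azero r j hrj]
        simp [Lb, Finsupp.single_apply, hrj]
    · rw [Bzero]
      simp [Lb, Finsupp.single_apply]
  have QL : ∀ t : ℤ, Q t = hh * F t := by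
    intro t
    have h := E1 1 0 t (1 + k)
    rw [show (1 : ℤ) + 0 + k = 1 + k from by ring] at h
    rw [if_pos rfl] at h
    rw [show 1 + k - 0 - k = (1 : ℤ) from by ring,
      show 1 + k - 1 - k = (0 : ℤ) from by ring] at h
    have g1 : (D (Lb (1 + k))) (false, 1 + k) = hh := Gconst (1 + k)
    have g2 : (D (Lb 1)) (false, 1) = hh := Gconst 1
    have g3 : (D (Lb 0)) (false, 0) = hh := Gconst 0
    rw [g1, g2, g3] at h
    push_cast at h
    linear_combination -3 * h
  have injT : ∀ l : Afk, Set.InjOn (fun j : ℤ => ((true, j) : Bool × ℤ))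
      ((fun j : ℤ => ((true, j) : Bool × ℤ)) ⁻¹' ↑l.support) := by
    intro l a _ b _ hab
    simpa using hab
  have injF : ∀ l : Afk, Set.InjOn (fun i : ℤ => ((false, i) : Bool × ℤ))
      ((fun i : ℤ => ((false, i) : Bool × ℤ)) ⁻¹' ↑l.support) := by
    intro l a _ b _ hab
    simpa using hab
  set c : ℤ →₀ ℂ :=
    (F t0)⁻¹ • Finsupp.comapDomain (fun i : ℤ => ((false, i) : Bool × ℤ)) (D (Mb t0))
      (injF _) with hc
  set d : ℤ → ℤ →₀ ℂ := fun r =>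
    Finsupp.comapDomain (fun j : ℤ => ((true, j) : Bool × ℤ)) (D (Mb r)) (injT _) with hd
  refine ⟨hh, c, d, DLr, ?_, ?_⟩
  · intro r
    ext p
    obtain ⟨b, j⟩ := p
    rw [Finsupp.add_apply, Finsupp.smul_apply, smul_eq_mul, Finsupp.sum_apply,
      Finsupp.sum_apply]
    cases b
    · rw [sumc _ _ j (fun i ci hij => by simp [Lb, Finsupp.single_apply, hij]) (by simp)]
      rw [sum0 _ _ (fun j' v => by simp [Mb, Finsupp.single_apply])]
      simp only [hc, Finsupp.smul_apply, smul_eq_mul, Finsupp.comapDomain_apply,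
        Lb, Finsupp.single_apply]
      have hcr := cRel r t0 j
      field_simp
      simp only [if_true, mul_one]
      linear_combination hcr
    · rw [sum0 _ _ (fun i ci => by simp [Lb, Finsupp.single_apply])]
      rw [sumc _ _ j (fun i ci hij => by simp [Mb, Finsupp.single_apply, hij]) (by simp)]
      simp [hd, Mb, Finsupp.single_apply, Finsupp.comapDomain_apply]
  · intro r
    have conv : ((d r).sum fun j v => F j * v) = Q r := by
      rw [hQ]
      simp only [hd]
      rw [Finsupp.sum, Finsupp.sum]
      rw [show (Finsupp.comapDomain (fun j : ℤ => ((true, j) : Bool × ℤ)) (D (Mb r))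
          (injT _)).support = (D (Mb r)).support.preimage _ (injT _) from rfl]
      rw [← Finset.sum_preimage (fun j : ℤ => ((true, j) : Bool × ℤ)) (D (Mb r)).support
        (injT _) (fun p => fval F p * (D (Mb r)) p) ?_]
      · exact Finset.sum_congr rfl (fun j _ => rfl)
      · rintro ⟨b, i⟩ hp hnr
        cases b
        · simp [fval]
        · exact absurd ⟨i, rfl⟩ hnr
    rw [conv, QL r]
end

section
/- Conversely, any linear map D on A_{f,k} defined by D(L_r) = h·L_r and D(M_r) = f(M_r)∑_{i∈ℤ} c_i L_i + ∑_{j∈ℤ} d_{r,j} M_j (with finitely supported coefficient families) satisfying ∑_{j∈ℤ} f(M_j) d_{r,j} = h·f(M_r) for all r ∈ ℤ is a 1/3-derivation of A_{f,k}. -/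
noncomputable def brL (F : ℤ → ℂ) (k : ℤ) : Afk →ₗ[ℂ] Afk →ₗ[ℂ] Afk →ₗ[ℂ] Afk :=
  Finsupp.lsum ℂ fun a => LinearMap.toSpanSingleton ℂ _
    (Finsupp.lsum ℂ fun b => LinearMap.toSpanSingleton ℂ _
      (Finsupp.lsum ℂ fun cc => LinearMap.toSpanSingleton ℂ _ (scf F k a b cc)))

theorem br_eq_brL (F : ℤ → ℂ) (k : ℤ) (x y z : Afk) : br F k x y z = brL F k x y z := by
  simp only [br, brL, Finsupp.lsum_apply, LinearMap.toSpanSingleton_apply,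
    Finsupp.sum_apply', LinearMap.finsupp_sum_apply, LinearMap.smul_apply, Finsupp.smul_sum,
    smul_smul, mul_assoc]

theorem brL_sss (F : ℤ → ℂ) (k : ℤ) (a b cc : Bool × ℤ) :
    brL F k (Finsupp.single a 1) (Finsupp.single b 1) (Finsupp.single cc 1) = scf F k a b cc := by
  simp [brL, Finsupp.lsum_single, LinearMap.toSpanSingleton_apply]

@[simp] theorem scf_LLM (F : ℤ → ℂ) (k r s t : ℤ) :
    scf F k (false, r) (false, s) (true, t) = (F t * ((r - s : ℤ) : ℂ)) • Lb (r + s + k) := rfl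
@[simp] theorem scf_LML (F : ℤ → ℂ) (k r s t : ℤ) :
    scf F k (false, r) (true, s) (false, t) = (F s * ((t - r : ℤ) : ℂ)) • Lb (r + t + k) := rfl
@[simp] theorem scf_MLL (F : ℤ → ℂ) (k r s t : ℤ) :
    scf F k (true, r) (false, s) (false, t) = (F r * ((s - t : ℤ) : ℂ)) • Lb (s + t + k) := rfl
@[simp] theorem scf_LLL (F : ℤ → ℂ) (k r s t : ℤ) :
    scf F k (false, r) (false, s) (false, t) = 0 := rfl
@[simp] theorem scf_MML (F : ℤ → ℂ) (k r s t : ℤ) :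
    scf F k (true, r) (true, s) (false, t) = 0 := rfl
@[simp] theorem scf_MLM (F : ℤ → ℂ) (k r s t : ℤ) :
    scf F k (true, r) (false, s) (true, t) = 0 := rfl
@[simp] theorem scf_LMM (F : ℤ → ℂ) (k r s t : ℤ) :
    scf F k (false, r) (true, s) (true, t) = 0 := rfl
@[simp] theorem scf_MMM (F : ℤ → ℂ) (k r s t : ℤ) :
    scf F k (true, r) (true, s) (true, t) = 0 := rfl

theorem fsum_smul {α : Type*} (f : α →₀ ℂ) (g : α → ℂ → ℂ) (v : Afk) :
    (f.sum fun a b => (g a b) • v) = (f.sum g) • v := by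
  rw [Finsupp.sum, Finsupp.sum, Finset.sum_smul]

theorem Afk_core (F : ℤ → ℂ) (k : ℤ)
    (D : Afk →ₗ[ℂ] Afk) (h : ℂ) (c : ℤ →₀ ℂ) (d : ℤ → ℤ →₀ ℂ)
    (hDL : ∀ r : ℤ, D (Lb r) = h • Lb r)
    (hDM : ∀ r : ℤ, D (Mb r) =
      F r • (c.sum fun i ci => ci • Lb i) + (d r).sum fun j v => v • Mb j)
    (hd : ∀ r : ℤ, ((d r).sum fun j v => F j * v) = h * F r) :
    ∀ a b e : Bool × ℤ, D (brL F k (Finsupp.single a 1) (Finsupp.single b 1) (Finsupp.single e 1)) =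
      (3⁻¹ : ℂ) • (brL F k (D (Finsupp.single a 1)) (Finsupp.single b 1) (Finsupp.single e 1)
        + brL F k (Finsupp.single a 1) (D (Finsupp.single b 1)) (Finsupp.single e 1)
        + brL F k (Finsupp.single a 1) (Finsupp.single b 1) (D (Finsupp.single e 1))) := by
  have hL : ∀ r : ℤ, Finsupp.single ((false : Bool), r) (1:ℂ) = Lb r := fun _ => rfl
  have hM : ∀ r : ℤ, Finsupp.single ((true : Bool), r) (1:ℂ) = Mb r := fun _ => rfl
  rintro ⟨ba, ra⟩ ⟨bb, rb⟩ ⟨bc, rc⟩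
  rw [brL_sss]
  cases ba <;> cases bb <;> cases bc <;>
    simp only [hL, hM, hDL, hDM, scf_LLM, scf_LML, scf_MLL, scf_LLL, scf_MML, scf_MLM,
      scf_LMM, scf_MMM, map_smul, map_add, map_zero, map_finsuppSum,
      LinearMap.smul_apply, LinearMap.add_apply, LinearMap.finsupp_sum_apply,
      Finsupp.sum_apply'] <;>
    simp only [← hL, ← hM, brL_sss, scf_LLM, scf_LML, scf_MLL, scf_LLL, scf_MML, scf_MLM,
      scf_LMM, scf_MMM, smul_zero, Finsupp.sum_fun_zero, add_zero, zero_add, smul_add, smul_smul]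
  case false.false.true =>
    rw [fsum_smul, show ((d rc).sum fun a b => b * (F a * ((ra - rb : ℤ) : ℂ)))
        = ((d rc).sum fun j v => F j * v) * ((ra - rb : ℤ) : ℂ) from by
      rw [Finsupp.sum_mul]; exact Finsupp.sum_congr fun a _ => by ring, hd]
    module
  case false.true.false =>
    rw [fsum_smul, show ((d rb).sum fun a b => b * (F a * ((rc - ra : ℤ) : ℂ)))
        = ((d rb).sum fun j v => F j * v) * ((rc - ra : ℤ) : ℂ) from by
      rw [Finsupp.sum_mul]; exact Finsupp.sum_congr fun a _ => by ring, hd]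
    module
  case true.false.false =>
    rw [fsum_smul, show ((d ra).sum fun a b => b * (F a * ((rb - rc : ℤ) : ℂ)))
        = ((d ra).sum fun j v => F j * v) * ((rb - rc : ℤ) : ℂ) from by
      rw [Finsupp.sum_mul]; exact Finsupp.sum_congr fun a _ => by ring, hd]
    module
  case false.true.true =>
    rw [Finsupp.smul_sum, Finsupp.smul_sum, ← Finsupp.sum_add]
    symm
    refine (Finsupp.sum_congr fun i hi => ?_).trans (Finsupp.sum_fun_zero _)
    rw [smul_smul, smul_smul, ← add_smul,
      show 3⁻¹ * F rb * (c i * (F rc * ((ra - i : ℤ) : ℂ)))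
        + 3⁻¹ * F rc * (c i * (F rb * ((i - ra : ℤ) : ℂ))) = 0 from by push_cast; ring,
      zero_smul]
  case true.false.true =>
    rw [Finsupp.smul_sum, Finsupp.smul_sum, ← Finsupp.sum_add]
    symm
    refine (Finsupp.sum_congr fun i hi => ?_).trans (Finsupp.sum_fun_zero _)
    rw [smul_smul, smul_smul, show rb + i + k = i + rb + k from by ring, ← add_smul,
      show 3⁻¹ * F ra * (c i * (F rc * ((i - rb : ℤ) : ℂ)))
        + 3⁻¹ * F rc * (c i * (F ra * ((rb - i : ℤ) : ℂ))) = 0 from by push_cast; ring,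
      zero_smul]
  case true.true.false =>
    rw [Finsupp.smul_sum, Finsupp.smul_sum, ← Finsupp.sum_add]
    symm
    refine (Finsupp.sum_congr fun i hi => ?_).trans (Finsupp.sum_fun_zero _)
    rw [smul_smul, smul_smul, ← add_smul,
      show 3⁻¹ * F ra * (c i * (F rb * ((rc - i : ℤ) : ℂ)))
        + 3⁻¹ * F rb * (c i * (F ra * ((i - rc : ℤ) : ℂ))) = 0 from by push_cast; ring,
      zero_smul]


/-- Conversely, any linear map `D` on `A_{f,k}` with
`D(L_r) = h L_r`, `D(M_r) = f(M_r) ∑ᵢ cᵢ Lᵢ + ∑ⱼ d_{r,j} Mⱼ` and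
`∑ⱼ f(Mⱼ) d_{r,j} = h f(M_r)` for all `r` is a 1/3-derivation of `A_{f,k}`. -/
theorem Afk_one_third_derivation_converse (F : ℤ → ℂ) (hF : ∃ t, F t ≠ 0) (k : ℤ)
    (D : Afk →ₗ[ℂ] Afk) (h : ℂ) (c : ℤ →₀ ℂ) (d : ℤ → ℤ →₀ ℂ)
    (hDL : ∀ r : ℤ, D (Lb r) = h • Lb r)
    (hDM : ∀ r : ℤ, D (Mb r) =
      F r • (c.sum fun i ci => ci • Lb i) + (d r).sum fun j v => v • Mb j)
    (hd : ∀ r : ℤ, ((d r).sum fun j v => F j * v) = h * F r) :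
    ∀ x y z : Afk, D (br F k x y z) =
      (3⁻¹ : ℂ) • (br F k (D x) y z + br F k x (D y) z + br F k x y (D z)) := by
  have core := Afk_core F k D h c d hDL hDM hd
  intro x y z
  simp only [br_eq_brL]
  induction x using Finsupp.induction_linear with
  | zero => simp
  | add x1 x2 ih1 ih2 =>
      simp only [map_add, LinearMap.add_apply] at *
      rw [ih1, ih2]; module
  | single a ca =>
    induction y using Finsupp.induction_linear with
    | zero => simp
    | add y1 y2 ih1 ih2 =>
        simp only [map_add, LinearMap.add_apply] at *
        rw [ih1, ih2]; module
    | single b cb =>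
      induction z using Finsupp.induction_linear with
      | zero => simp
      | add z1 z2 ih1 ih2 =>
          simp only [map_add, LinearMap.add_apply] at *
          rw [ih1, ih2]; module
      | single e ce =>
        rw [show Finsupp.single a ca = ca • Finsupp.single a (1:ℂ) from by
              simp [Finsupp.smul_single],
            show Finsupp.single b cb = cb • Finsupp.single b (1:ℂ) from by
              simp [Finsupp.smul_single],
            show Finsupp.single e ce = ce • Finsupp.single e (1:ℂ) from by
              simp [Finsupp.smul_single]]
        simp only [map_smul, LinearMap.smul_apply]
        rw [core a b e]
        module
end

section
/- Let α ∈ ℂ, (c_p)_{p∈ℤ} a finitely supported family of complex numbers, and (d_{i,j,q})_{i,j,q∈ℤ} complex numbers (finitely supported in q) satisfying: d_{i,j,q} = d_{j,i,q}; ∑_q f(M_q) d_{i,j,q} = α f(M_i) f(M_j); and ∑_q d_{r,s,q} d_{q,t,p} = ∑_q d_{s,t,q} d_{q,r,p} for all indices. Then the multiplication on A_{f,k} defined by L_i·L_j = 0, L_i·M_j = α f(M_j) L_i, M_i·M_j = f(M_i)f(M_j)∑_p c_p L_p + ∑_q d_{i,j,q} M_q is commutative and associative. -/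
lemma sL (r : ℤ) (v : ℂ) : (Finsupp.single ((false:Bool), r) v : Afk) = v • Lb r := by
  simp [Lb, Finsupp.smul_single]

lemma sM (r : ℤ) (v : ℂ) : (Finsupp.single ((true:Bool), r) v : Afk) = v • Mb r := by
  simp [Mb, Finsupp.smul_single]

lemma sum_smul_const {M : Type*} [AddCommMonoid M] [Module ℂ M] (f : ℤ →₀ ℂ)
    (g : ℤ → ℂ → ℂ) (x : M) :
    (f.sum fun a v => (g a v) • x) = (f.sum g) • x := by
  rw [Finsupp.sum, Finsupp.sum, Finset.sum_smul]

lemma mul_sum_left (mul : Afk →ₗ[ℂ] Afk →ₗ[ℂ] Afk) (f : ℤ →₀ ℂ) (g : ℤ → ℂ → Afk) (z : Afk) :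
    mul (f.sum g) z = f.sum fun a v => mul (g a v) z :=
  map_finsuppSum (mul.flip z) f g

lemma mul_sum_right (mul : Afk →ₗ[ℂ] Afk →ₗ[ℂ] Afk) (x : Afk) (f : ℤ →₀ ℂ) (g : ℤ → ℂ → Afk) :
    mul x (f.sum g) = f.sum fun a v => mul x (g a v) :=
  map_finsuppSum (mul x) f g

/-- The multiplication `L_i·L_j = 0`, `L_i·M_j = α f(M_j) L_i`,
`M_i·M_j = f(M_i)f(M_j) ∑_p c_p L_p + ∑_q d_{i,j,q} M_q`, with coefficients
satisfying symmetry, `∑_q f(M_q) d_{i,j,q} = α f(M_i) f(M_j)` and the associativity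
relation, is commutative and associative. -/
theorem Afk_multiplication_comm_assoc (F : ℤ → ℂ) (hF : ∃ t, F t ≠ 0)
    (α : ℂ) (c : ℤ →₀ ℂ) (d : ℤ → ℤ → ℤ →₀ ℂ)
    (hsym : ∀ i j : ℤ, d i j = d j i)
    (hsum : ∀ i j : ℤ, ((d i j).sum fun q v => F q * v) = α * F i * F j)
    (hass : ∀ r s t p : ℤ,
      ((d r s).sum fun q v => v * (d q t) p) = ((d s t).sum fun q v => v * (d q r) p))
    (mul : Afk →ₗ[ℂ] Afk →ₗ[ℂ] Afk)
    (hLL : ∀ i j : ℤ, mul (Lb i) (Lb j) = 0)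
    (hLM : ∀ i j : ℤ, mul (Lb i) (Mb j) = (α * F j) • Lb i)
    (hML : ∀ i j : ℤ, mul (Mb i) (Lb j) = (α * F i) • Lb j)
    (hMM : ∀ i j : ℤ, mul (Mb i) (Mb j) =
      (F i * F j) • (c.sum fun p v => v • Lb p) + (d i j).sum fun q v => v • Mb q) :
    (∀ x y : Afk, mul x y = mul y x) ∧
    (∀ x y z : Afk, mul (mul x y) z = mul x (mul y z)) := by
  constructor
  ·
      intro x y
      induction x using Finsupp.induction_linear with
      | zero => simp
      | add p q hp hq => simp [map_add, hp, hq]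
      | single a v =>
        induction y using Finsupp.induction_linear with
        | zero => simp
        | add p q hp hq => simp [map_add, hp, hq]
        | single b w =>
          obtain ⟨b1, i⟩ := a; obtain ⟨b2, j⟩ := b
          cases b1 <;> cases b2 <;>
            simp only [sL, sM, map_smul, LinearMap.smul_apply, hLL, hLM, hML, hMM, smul_zero]
          · rw [smul_comm]
          · rw [smul_comm]
          · rw [hsym j i, mul_comm (F j) (F i), smul_comm]

  ·
      set S : Afk := c.sum fun p v => v • Lb p with hS
      have mulLS : ∀ i, mul (Lb i) S = 0 := by
        intro i
        rw [hS, mul_sum_right]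
        simp [hLL]
      have mulMS : ∀ i, mul (Mb i) S = (α * F i) • S := by
        intro i
        rw [hS, mul_sum_right, Finsupp.smul_sum]
        simp only [map_smul, hML]
        exact Finsupp.sum_congr fun p _ => smul_comm _ _ _
      have mulSL : ∀ j, mul S (Lb j) = 0 := by
        intro j
        rw [hS, mul_sum_left]
        simp [hLL]
      have mulSM : ∀ t, mul S (Mb t) = (α * F t) • S := by
        intro t
        rw [hS, mul_sum_left, Finsupp.smul_sum]
        simp only [map_smul, LinearMap.smul_apply, hLM]
        exact Finsupp.sum_congr fun p _ => smul_comm _ _ _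
      have SL : ∀ p : ℤ, S (false, p) = c p := by
        intro p
        rw [hS, Finsupp.sum_apply]
        simp only [Lb, Finsupp.smul_apply, Finsupp.single_apply, smul_eq_mul, mul_ite, mul_one, mul_zero, Prod.mk.injEq, true_and]
        rw [Finsupp.sum_ite_self_eq']
      have SM : ∀ p : ℤ, S (true, p) = 0 := by
        intro p
        rw [hS, Finsupp.sum_apply]
        simp [Lb, Finsupp.single_apply]
      have DL : ∀ (f : ℤ →₀ ℂ) (p : ℤ), (f.sum fun q v => v • Mb q) (false, p) = 0 := by
        intro f p
        rw [Finsupp.sum_apply]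
        simp [Mb, Finsupp.single_apply]
      have DM : ∀ (f : ℤ →₀ ℂ) (p : ℤ), (f.sum fun q v => v • Mb q) (true, p) = f p := by
        intro f p
        rw [Finsupp.sum_apply]
        simp only [Mb, Finsupp.smul_apply, Finsupp.single_apply, smul_eq_mul, mul_ite, mul_one, mul_zero, Prod.mk.injEq, true_and]
        rw [Finsupp.sum_ite_self_eq']
      have pull1 : ∀ (f : ℤ →₀ ℂ), (f.sum fun q v => v * (α * F q)) = α * (f.sum fun q v => F q * v) := by
        intro f
        rw [Finsupp.sum, Finsupp.sum, Finset.mul_sum]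
        exact Finset.sum_congr rfl fun q _ => by ring
      intro x y z
      induction x using Finsupp.induction_linear with
      | zero => simp
      | add p q hp hq => simp [map_add, hp, hq]
      | single a va =>
        induction y using Finsupp.induction_linear with
        | zero => simp
        | add p q hp hq => simp [map_add, hp, hq]
        | single b vb =>
          induction z using Finsupp.induction_linear with
          | zero => simp
          | add p q hp hq => simp [map_add, hp, hq]
          | single cc vc =>
            obtain ⟨b1, i⟩ := a; obtain ⟨b2, j⟩ := b; obtain ⟨b3, t⟩ := cc
            cases b1 <;> cases b2 <;> cases b3 <;>
              simp only [sL, sM, map_smul, LinearMap.smul_apply, hLL, hLM, hML, hMM,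
                smul_zero, map_zero, LinearMap.zero_apply]
            -- LMM
            · rw [map_add, map_smul, mulLS, smul_zero, zero_add, mul_sum_right]
              simp only [map_smul, hLM, smul_smul]
              rw [sum_smul_const, pull1, hsum]
              module
            -- MLM
            · module
            -- MML
            · rw [map_add, LinearMap.add_apply, map_smul, LinearMap.smul_apply, mulSL,
                smul_zero, zero_add, mul_sum_left]
              simp only [map_smul, LinearMap.smul_apply, hML, smul_smul]
              rw [sum_smul_const, pull1, hsum]
              module
            -- MMM
            · rw [map_add, LinearMap.add_apply, map_smul, LinearMap.smul_apply, mulSM,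
                mul_sum_left, map_add, map_smul, mulMS, mul_sum_right]
              simp only [map_smul, LinearMap.smul_apply, hMM]
              congr 1
              congr 1
              congr 1
              ext ⟨b, p⟩
              cases b
              · simp only [Finsupp.add_apply, Finsupp.smul_apply, Finsupp.sum_apply,
                  SL, SM, DL, DM, smul_eq_mul, add_zero, mul_zero, zero_add]
                have h1 : ((d i j).sum fun q v => v * (F q * F t * c p))
                    = ((d i j).sum fun q v => F q * v) * (F t * c p) := by
                  rw [Finsupp.sum, Finsupp.sum, Finset.sum_mul]
                  exact Finset.sum_congr rfl fun q _ => by ring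
                have h2 : ((d j t).sum fun q v => v * (F i * F q * c p))
                    = ((d j t).sum fun q v => F q * v) * (F i * c p) := by
                  rw [Finsupp.sum, Finsupp.sum, Finset.sum_mul]
                  exact Finset.sum_congr rfl fun q _ => by ring
                rw [h1, h2, hsum, hsum]
                ring
              · simp only [Finsupp.add_apply, Finsupp.smul_apply, Finsupp.sum_apply,
                  SL, SM, DL, DM, smul_eq_mul, add_zero, mul_zero, zero_add]
                rw [hass i j t p]
                exact Finsupp.sum_congr fun q _ => by rw [hsym q i]
end

section
/- With multiplication L_i·L_j = 0, L_i·M_j = α f(M_j) L_i, M_i·M_j = f(M_i)f(M_j)∑_p c_p L_p + ∑_q d_{i,j,q} M_q on A_{f,k} (coefficients satisfying the symmetry, ∑_q f(M_q) d_{i,j,q} = α f(M_i) f(M_j), and associativity conditions), the triple (A_{f,k}, ·, [·,·,·]) satisfies the transposed Poisson compatibility: 3u·[x,y,z] = [u·x,y,z] + [x,u·y,z] + [x,y,u·z] for all u,x,y,z ∈ A_{f,k}. -/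
/-- The bracket as a genuine trilinear map (partial, inner two slots). -/
noncomputable def T2 (F : ℤ → ℂ) (k : ℤ) (a : Bool × ℤ) : Afk →ₗ[ℂ] Afk →ₗ[ℂ] Afk :=
  Finsupp.lsum ℂ fun b => LinearMap.toSpanSingleton ℂ (Afk →ₗ[ℂ] Afk)
    (Finsupp.lsum ℂ fun c => LinearMap.toSpanSingleton ℂ Afk (scf F k a b c))

/-- The bracket as a genuine trilinear map. -/
noncomputable def T (F : ℤ → ℂ) (k : ℤ) : Afk →ₗ[ℂ] Afk →ₗ[ℂ] Afk →ₗ[ℂ] Afk :=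
  Finsupp.lsum ℂ fun a => LinearMap.toSpanSingleton ℂ _ (T2 F k a)

lemma br_eq (F : ℤ → ℂ) (k : ℤ) (x y z : Afk) : br F k x y z = T F k x y z := by
  simp [br, T, T2, Finsupp.lsum_apply, Finsupp.sum, LinearMap.sum_apply,
    LinearMap.toSpanSingleton_apply, LinearMap.smul_apply, Finset.smul_sum, smul_smul, mul_assoc]

section Tlemmas
variable (F : ℤ → ℂ) (k : ℤ)

lemma T_LLL (r s t : ℤ) : T F k (Lb r) (Lb s) (Lb t) = 0 := by
  simp [T, T2, Lb, Finsupp.lsum_single, LinearMap.toSpanSingleton_apply, scf]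

lemma T_LLM (r s t : ℤ) : T F k (Lb r) (Lb s) (Mb t)
    = (F t * ((r - s : ℤ) : ℂ)) • Lb (r + s + k) := by
  simp [T, T2, Lb, Mb, Finsupp.lsum_single, LinearMap.toSpanSingleton_apply, scf]

lemma T_LML (r s t : ℤ) : T F k (Lb r) (Mb s) (Lb t)
    = (F s * ((t - r : ℤ) : ℂ)) • Lb (r + t + k) := by
  simp [T, T2, Lb, Mb, Finsupp.lsum_single, LinearMap.toSpanSingleton_apply, scf]

lemma T_MLL (r s t : ℤ) : T F k (Mb r) (Lb s) (Lb t)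
    = (F r * ((s - t : ℤ) : ℂ)) • Lb (s + t + k) := by
  simp [T, T2, Lb, Mb, Finsupp.lsum_single, LinearMap.toSpanSingleton_apply, scf]

lemma T_LMM (r s t : ℤ) : T F k (Lb r) (Mb s) (Mb t) = 0 := by
  simp [T, T2, Lb, Mb, Finsupp.lsum_single, LinearMap.toSpanSingleton_apply, scf]

lemma T_MLM (r s t : ℤ) : T F k (Mb r) (Lb s) (Mb t) = 0 := by
  simp [T, T2, Lb, Mb, Finsupp.lsum_single, LinearMap.toSpanSingleton_apply, scf]

lemma T_MML (r s t : ℤ) : T F k (Mb r) (Mb s) (Lb t) = 0 := by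
  simp [T, T2, Lb, Mb, Finsupp.lsum_single, LinearMap.toSpanSingleton_apply, scf]

lemma T_MMM (r s t : ℤ) : T F k (Mb r) (Mb s) (Mb t) = 0 := by
  simp [T, T2, Lb, Mb, Finsupp.lsum_single, LinearMap.toSpanSingleton_apply, scf]

lemma T_sum1 (w : ℤ →₀ ℂ) (g : ℤ → Afk) (Y Z : Afk) :
    T F k (w.sum fun p v => v • g p) Y Z = w.sum fun p v => v • T F k (g p) Y Z := by
  simp [Finsupp.sum, map_sum, LinearMap.sum_apply, map_smul, LinearMap.smul_apply]

lemma T_sum2 (w : ℤ →₀ ℂ) (g : ℤ → Afk) (X Z : Afk) :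
    T F k X (w.sum fun p v => v • g p) Z = w.sum fun p v => v • T F k X (g p) Z := by
  simp [Finsupp.sum, map_sum, LinearMap.sum_apply, map_smul, LinearMap.smul_apply]

lemma T_sum3 (w : ℤ →₀ ℂ) (g : ℤ → Afk) (X Y : Afk) :
    T F k X Y (w.sum fun p v => v • g p) = w.sum fun p v => v • T F k X Y (g p) := by
  simp [Finsupp.sum, map_sum, map_smul]

end Tlemmas

lemma sum_smul_c (w : ℤ →₀ ℂ) (h : ℤ → ℂ → ℂ) (e : Afk) :
    (w.sum fun q v => (h q v) • e) = (w.sum h) • e := by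
  simp [Finsupp.sum, Finset.sum_smul]

lemma d_sum_eval (F : ℤ → ℂ) (α : ℂ) (d : ℤ → ℤ → ℤ →₀ ℂ)
    (hsum : ∀ i j : ℤ, ((d i j).sum fun q v => F q * v) = α * F i * F j)
    (i j : ℤ) (X : ℂ) (n : ℤ) :
    ((d i j).sum fun p v => (v * (F p * X)) • Lb n) = (α * F i * F j * X) • Lb n := by
  rw [sum_smul_c (d i j) (fun p v => v * (F p * X)) (Lb n)]
  congr 1
  rw [show ((d i j).sum fun p v => v * (F p * X)) = (d i j).sum fun p v => (F p * v) * X from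
    Finsupp.sum_congr fun p _ => by ring]
  rw [← Finsupp.sum_mul, hsum]

lemma key_basis (F : ℤ → ℂ) (k : ℤ)
    (α : ℂ) (c : ℤ →₀ ℂ) (d : ℤ → ℤ → ℤ →₀ ℂ)
    (hsum : ∀ i j : ℤ, ((d i j).sum fun q v => F q * v) = α * F i * F j)
    (mul : Afk →ₗ[ℂ] Afk →ₗ[ℂ] Afk)
    (hLL : ∀ i j : ℤ, mul (Lb i) (Lb j) = 0)
    (hLM : ∀ i j : ℤ, mul (Lb i) (Mb j) = (α * F j) • Lb i)
    (hML : ∀ i j : ℤ, mul (Mb i) (Lb j) = (α * F i) • Lb j)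
    (hMM : ∀ i j : ℤ, mul (Mb i) (Mb j) =
      (F i * F j) • (c.sum fun p v => v • Lb p) + (d i j).sum fun q v => v • Mb q) :
    ∀ e a b c' : Bool × ℤ,
      (3 : ℂ) • mul (Finsupp.single e 1)
          (T F k (Finsupp.single a 1) (Finsupp.single b 1) (Finsupp.single c' 1)) =
        T F k (mul (Finsupp.single e 1) (Finsupp.single a 1))
            (Finsupp.single b 1) (Finsupp.single c' 1)
          + T F k (Finsupp.single a 1)
              (mul (Finsupp.single e 1) (Finsupp.single b 1)) (Finsupp.single c' 1)
          + T F k (Finsupp.single a 1) (Finsupp.single b 1)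
              (mul (Finsupp.single e 1) (Finsupp.single c' 1)) := by
  have bL : ∀ i : ℤ, (Finsupp.single ((false : Bool), i) (1:ℂ) : Afk) = Lb i := fun _ => rfl
  have bM : ∀ i : ℤ, (Finsupp.single ((true : Bool), i) (1:ℂ) : Afk) = Mb i := fun _ => rfl
  rintro ⟨eb, i⟩ ⟨ab, r⟩ ⟨bb, s⟩ ⟨cb, t⟩
  cases eb <;> cases ab <;> cases bb <;> cases cb <;>
    simp only [bL, bM, hLL, hLM, hML, hMM, map_zero, map_add, map_smul, smul_zero,
      LinearMap.zero_apply, LinearMap.smul_apply, LinearMap.add_apply,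
      T_LLL, T_LLM, T_LML, T_MLL, T_LMM, T_MLM, T_MML, T_MMM,
      T_sum1, T_sum2, T_sum3, zero_add, add_zero, zero_smul, smul_smul]
  -- helper to evaluate the `d`-sums via `hsum`
  all_goals (try (simp only [show ∀ (w : ℤ →₀ ℂ), (w.sum fun _ _ => (0:Afk)) = 0 from fun w => Finset.sum_const_zero, smul_zero, zero_add, add_zero]))
  -- goal 1 : (L_i; L,M,M) cancellation
  · match_scalars <;> push_cast <;> ring
  -- goal 2 : (L_i; M,L,M) cancellation, index mismatch
  · rw [show s + i + k = i + s + k by ring]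
    match_scalars <;> push_cast <;> ring
  -- goal 3 : (L_i; M,M,L) cancellation
  · match_scalars <;> push_cast <;> ring
  -- goal 4 : (M_i; L,L,M) uses hsum
  · rw [d_sum_eval F α d hsum i t]
    match_scalars <;> push_cast <;> ring
  -- goal 5 : (M_i; L,M,L) uses hsum
  · rw [d_sum_eval F α d hsum i s]
    match_scalars <;> push_cast <;> ring
  -- goal 6 : (M_i; M,L,M) c-sum cancellation
  · rw [Finsupp.smul_sum, Finsupp.smul_sum, ← Finsupp.sum_add]
    simp only [Finsupp.sum]
    symm; apply Finset.sum_eq_zero; intro p _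
    match_scalars <;> push_cast <;> ring
  -- goal 7 : (M_i; M,L,L) uses hsum
  · rw [d_sum_eval F α d hsum i r]
    match_scalars <;> push_cast <;> ring
  -- goal 8 : (M_i; M,M,L)? c-sum cancellation with index mismatch
  · simp only [show ∀ p : ℤ, s + p + k = p + s + k from fun p => by ring]
    rw [Finsupp.smul_sum, Finsupp.smul_sum, ← Finsupp.sum_add]
    simp only [Finsupp.sum]
    symm; apply Finset.sum_eq_zero; intro p _
    match_scalars <;> push_cast <;> ring
  -- goal 9 : c-sum cancellation
  · rw [Finsupp.smul_sum, Finsupp.smul_sum, ← Finsupp.sum_add]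
    simp only [Finsupp.sum]
    symm; apply Finset.sum_eq_zero; intro p _
    match_scalars <;> push_cast <;> ring

/-- With the multiplication `L_i·L_j = 0`, `L_i·M_j = α f(M_j) L_i`,
`M_i·M_j = f(M_i)f(M_j) ∑_p c_p L_p + ∑_q d_{i,j,q} M_q` (coefficients satisfying
symmetry, `∑_q f(M_q) d_{i,j,q} = α f(M_i) f(M_j)` and the associativity relation),
the triple `(A_{f,k}, ·, [·,·,·])` satisfies the transposed Poisson compatibility. -/
theorem Afk_multiplication_transposed_compat (F : ℤ → ℂ) (hF : ∃ t, F t ≠ 0) (k : ℤ)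
    (α : ℂ) (c : ℤ →₀ ℂ) (d : ℤ → ℤ → ℤ →₀ ℂ)
    (hsym : ∀ i j : ℤ, d i j = d j i)
    (hsum : ∀ i j : ℤ, ((d i j).sum fun q v => F q * v) = α * F i * F j)
    (hass : ∀ r s t p : ℤ,
      ((d r s).sum fun q v => v * (d q t) p) = ((d s t).sum fun q v => v * (d q r) p))
    (mul : Afk →ₗ[ℂ] Afk →ₗ[ℂ] Afk)
    (hLL : ∀ i j : ℤ, mul (Lb i) (Lb j) = 0)
    (hLM : ∀ i j : ℤ, mul (Lb i) (Mb j) = (α * F j) • Lb i)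
    (hML : ∀ i j : ℤ, mul (Mb i) (Lb j) = (α * F i) • Lb j)
    (hMM : ∀ i j : ℤ, mul (Mb i) (Mb j) =
      (F i * F j) • (c.sum fun p v => v • Lb p) + (d i j).sum fun q v => v • Mb q) :
    ∀ u x y z : Afk, (3 : ℂ) • mul u (br F k x y z) =
      br F k (mul u x) y z + br F k x (mul u y) z + br F k x y (mul u z) := by
  have key := key_basis F k α c d hsum mul hLL hLM hML hMM
  have hs : ∀ (p : Bool × ℤ) (v : ℂ), (Finsupp.single p v : Afk) = v • Finsupp.single p 1 := by
    intro p v; rw [Finsupp.smul_single', mul_one]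
  intro u x y z
  simp only [br_eq]
  induction u using Finsupp.induction_linear with
  | zero => simp
  | add u₁ u₂ h₁ h₂ =>
    simp only [map_add, LinearMap.add_apply, smul_add] at h₁ h₂ ⊢
    rw [h₁, h₂]; abel
  | single e ce =>
    induction x using Finsupp.induction_linear with
    | zero => simp
    | add x₁ x₂ h₁ h₂ =>
      simp only [map_add, LinearMap.add_apply, smul_add] at h₁ h₂ ⊢
      rw [h₁, h₂]; abel
    | single a ca =>
      induction y using Finsupp.induction_linear with
      | zero => simp
      | add y₁ y₂ h₁ h₂ =>
        simp only [map_add, LinearMap.add_apply, smul_add] at h₁ h₂ ⊢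
        rw [h₁, h₂]; abel
      | single b cb =>
        induction z using Finsupp.induction_linear with
        | zero => simp
        | add z₁ z₂ h₁ h₂ =>
          simp only [map_add, LinearMap.add_apply, smul_add] at h₁ h₂ ⊢
          rw [h₁, h₂]; abel
        | single c' cv =>
          rw [hs e ce, hs a ca, hs b cb, hs c' cv]
          simp only [map_smul, LinearMap.smul_apply]
          linear_combination (norm := module) (ce * ca * cb * cv) • key e a b c'
end
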